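/- arXiv:1411.4392 — 4 statements merged into one kernel-verified Lean document; each statement's English description precedes it below -/
import Mathlib

section
/- Let A be a ring, e ∈ A an idempotent, and B = A/AeA. Then the sequence of additive maps eAe/[eAe,eAe] → A/[A,A] → B/[B,B] → 0 induced by the inclusion eAe ⊆ A and the projection A → B is exact; i.e. the second map is surjective and its kernel is exactly the image of the first map. -/
/-- The additive subgroup of a ring generated by all commutators `a*b - b*a`. -/
def commutatorAddSubgroup (R : Type*) [Ring R] : AddSubgroup R :=
  AddSubgroup.closure {x : R | ∃ a b : R, x = a * b - b * a}

/-- Let `A` be a ring, `e ∈ A` an idempotent, and `B = A/AeA`.  Then the sequence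
`eAe/[eAe,eAe] → A/[A,A] → B/[B,B] → 0` is exact: the second map is surjective and
its kernel is exactly the image of the first map (i.e. the image in `A/[A,A]` of
the set `eAe`). -/
theorem stmt0 {A B : Type*} [Ring A] [Ring B] (e : A) (he : e * e = e)
    (π : A →+* B) (hsurj : Function.Surjective π)
    (hker : ∀ x : A, π x = 0 ↔ x ∈ AddSubgroup.closure {y : A | ∃ a b : A, y = a * e * b})
    (hmap : commutatorAddSubgroup A ≤ (commutatorAddSubgroup B).comap π.toAddMonoidHom) :
    Function.Surjective
      (QuotientAddGroup.map (commutatorAddSubgroup A) (commutatorAddSubgroup B)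
        π.toAddMonoidHom hmap) ∧
    AddMonoidHom.ker
      (QuotientAddGroup.map (commutatorAddSubgroup A) (commutatorAddSubgroup B)
        π.toAddMonoidHom hmap) =
    AddSubgroup.map (QuotientAddGroup.mk' (commutatorAddSubgroup A))
      (AddSubgroup.closure {y : A | ∃ a : A, y = e * a * e}) := by
  set S := AddSubgroup.closure {y : A | ∃ a b : A, y = a * e * b} with hS
  set T := AddSubgroup.closure {y : A | ∃ a : A, y = e * a * e} with hT
  set CA := commutatorAddSubgroup A with hCA
  set CB := commutatorAddSubgroup B with hCB'
  constructor
  · intro y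
    obtain ⟨b, rfl⟩ := QuotientAddGroup.mk'_surjective _ y
    obtain ⟨a, rfl⟩ := hsurj b
    exact ⟨QuotientAddGroup.mk' _ a, rfl⟩
  · -- [B,B] = π [A,A]
    have hCB : CB = AddSubgroup.map π.toAddMonoidHom CA := by
      apply le_antisymm
      · rw [hCB', commutatorAddSubgroup, AddSubgroup.closure_le]
        rintro x ⟨b1, b2, rfl⟩
        obtain ⟨a1, rfl⟩ := hsurj b1
        obtain ⟨a2, rfl⟩ := hsurj b2
        exact ⟨a1 * a2 - a2 * a1, AddSubgroup.subset_closure ⟨a1, a2, rfl⟩,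
          by simp [map_sub, map_mul]⟩
      · exact AddSubgroup.map_le_iff_le_comap.mpr hmap
    -- S ⊔ CA = T ⊔ CA
    have hST : S ⊔ CA = T ⊔ CA := by
      apply le_antisymm
      · refine sup_le ?_ le_sup_right
        rw [hS, AddSubgroup.closure_le]
        rintro x ⟨a, b, rfl⟩
        have h1 : e * (b * a) * e ∈ T := AddSubgroup.subset_closure ⟨b * a, rfl⟩
        have h2 : a * e * (e * b) - (e * b) * (a * e) ∈ CA :=
          AddSubgroup.subset_closure ⟨a * e, e * b, rfl⟩
        have heq : a * e * b = e * (b * a) * e + (a * e * (e * b) - (e * b) * (a * e)) := by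
          have h3 : a * e * (e * b) = a * e * b := by
            rw [show a * e * (e * b) = a * (e * e) * b by noncomm_ring, he]
          have h4 : (e * b) * (a * e) = e * (b * a) * e := by noncomm_ring
          rw [h3, h4]; abel
        rw [heq]
        exact add_mem (AddSubgroup.mem_sup_left h1) (AddSubgroup.mem_sup_right h2)
      · refine sup_le ?_ le_sup_right
        rw [hT, AddSubgroup.closure_le]
        rintro x ⟨a, rfl⟩
        refine AddSubgroup.mem_sup_left (AddSubgroup.subset_closure ⟨e, a * e, ?_⟩)
        rw [he, ← mul_assoc]
    ext q
    obtain ⟨x, rfl⟩ := QuotientAddGroup.mk'_surjective _ q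
    constructor
    · intro hq
      have hπx : π x ∈ CB := by
        have := hq
        rw [AddMonoidHom.mem_ker] at this
        have h0 : (QuotientAddGroup.map CA CB π.toAddMonoidHom hmap)
            (QuotientAddGroup.mk' CA x) = QuotientAddGroup.mk' CB (π x) := rfl
        rw [h0] at this
        exact (QuotientAddGroup.eq_zero_iff _).mp this
      rw [hCB] at hπx
      obtain ⟨c, hc, hπc⟩ := hπx
      have hxc : x - c ∈ S := (hker (x - c)).mp (by
        simp only [map_sub]
        rw [show π.toAddMonoidHom c = π c from rfl] at hπc
        rw [hπc, sub_self])
      have hx : x ∈ T ⊔ CA := by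
        rw [← hST]
        have : x = (x - c) + c := by abel
        rw [this]
        exact add_mem (AddSubgroup.mem_sup_left hxc) (AddSubgroup.mem_sup_right hc)
      rw [AddSubgroup.mem_sup] at hx
      obtain ⟨t, ht, c', hc', rfl⟩ := hx
      refine ⟨t, ht, ?_⟩
      have : QuotientAddGroup.mk' CA c' = 0 := (QuotientAddGroup.eq_zero_iff _).mpr hc'
      rw [map_add, this, add_zero]
    · rintro ⟨t, ht, hte⟩
      rw [AddMonoidHom.mem_ker]
      have hxt : x - t ∈ CA := by
        apply (QuotientAddGroup.eq_zero_iff (x - t)).mp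
        show (QuotientAddGroup.mk' CA) (x - t) = 0
        rw [map_sub, hte, sub_self]
      have hx : x ∈ S ⊔ CA := by
        rw [hST]
        have hx' : x = t + (x - t) := by abel
        rw [hx']
        exact add_mem (AddSubgroup.mem_sup_left ht) (AddSubgroup.mem_sup_right hxt)
      rw [AddSubgroup.mem_sup] at hx
      obtain ⟨s, hs, c, hc, rfl⟩ := hx
      have h0 : (QuotientAddGroup.map CA CB π.toAddMonoidHom hmap)
          (QuotientAddGroup.mk' CA (s + c)) = QuotientAddGroup.mk' CB (π (s + c)) := rfl
      rw [h0]
      apply (QuotientAddGroup.eq_zero_iff _).mpr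
      have hπs : π s = 0 := (hker s).mpr hs
      have hπc : π c ∈ CB := hmap hc
      rw [map_add, hπs, zero_add]
      exact hπc
end

section
/- For k-algebras A and B over a commutative ring k, the canonical map tr(A) ⊗_k tr(B) → tr(A ⊗_k B) sending (a + [A,A]) ⊗ (b + [B,B]) to a⊗b + [A⊗B, A⊗B] is a well-defined isomorphism of k-modules, where tr(R) = R/[R,R]. -/
open TensorProduct

/-- The `k`-submodule of an algebra spanned by all commutators `a*b - b*a`;
the cocenter (trace) is the quotient by this submodule. -/
def commutatorSubmodule (k R : Type*) [CommRing k] [Ring R] [Algebra k R] :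
    Submodule k R :=
  Submodule.span k {x : R | ∃ a b : R, x = a * b - b * a}

lemma comm_mem_commutatorSubmodule {k R : Type*} [CommRing k] [Ring R] [Algebra k R]
    (a b : R) : a * b - b * a ∈ commutatorSubmodule k R :=
  Submodule.subset_span ⟨a, b, rfl⟩

lemma mul_sub_mul_mem {k R : Type*} [CommRing k] [Ring R] [Algebra k R]
    (x y : R) : x * y - y * x ∈ commutatorSubmodule k R :=
  comm_mem_commutatorSubmodule x y

lemma key_eq (k A B : Type*) [CommRing k] [Ring A] [Ring B]
    [Algebra k A] [Algebra k B] :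
    (LinearMap.range (TensorProduct.map (commutatorSubmodule k A).subtype
        (LinearMap.id : B →ₗ[k] B)) ⊔
      LinearMap.range (TensorProduct.map (LinearMap.id : A →ₗ[k] A)
        (commutatorSubmodule k B).subtype)) = commutatorSubmodule k (A ⊗[k] B) := by
  apply le_antisymm
  · apply sup_le
    · rintro _ ⟨x, rfl⟩
      induction x using TensorProduct.induction_on with
      | zero => simp
      | tmul c b =>
        obtain ⟨c, hc⟩ := c
        simp only [TensorProduct.map_tmul, Submodule.coe_subtype, LinearMap.id_coe, id_eq]
        induction hc using Submodule.span_induction with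
        | mem g hg =>
          obtain ⟨a, a', rfl⟩ := hg
          have : (a * a' - a' * a) ⊗ₜ[k] b =
              (a ⊗ₜ[k] b) * (a' ⊗ₜ[k] (1 : B)) - (a' ⊗ₜ[k] (1 : B)) * (a ⊗ₜ[k] b) := by
            simp [TensorProduct.sub_tmul, Algebra.TensorProduct.tmul_mul_tmul]
          rw [this]
          exact comm_mem_commutatorSubmodule _ _
        | zero => simp
        | add x y _ _ hx hy => rw [TensorProduct.add_tmul]; exact add_mem hx hy
        | smul r x _ hx => rw [← TensorProduct.smul_tmul']; exact Submodule.smul_mem _ r hx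
      | add x y hx hy => rw [map_add]; exact add_mem hx hy
    · rintro _ ⟨x, rfl⟩
      induction x using TensorProduct.induction_on with
      | zero => simp
      | tmul a c =>
        obtain ⟨c, hc⟩ := c
        simp only [TensorProduct.map_tmul, Submodule.coe_subtype, LinearMap.id_coe, id_eq]
        induction hc using Submodule.span_induction with
        | mem g hg =>
          obtain ⟨b, b', rfl⟩ := hg
          have : a ⊗ₜ[k] (b * b' - b' * b) =
              (a ⊗ₜ[k] b) * ((1 : A) ⊗ₜ[k] b') - ((1 : A) ⊗ₜ[k] b') * (a ⊗ₜ[k] b) := by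
            simp [TensorProduct.tmul_sub, Algebra.TensorProduct.tmul_mul_tmul]
          rw [this]
          exact comm_mem_commutatorSubmodule _ _
        | zero => simp
        | add x y _ _ hx hy => rw [TensorProduct.tmul_add]; exact add_mem hx hy
        | smul r x _ hx => rw [TensorProduct.tmul_smul]; exact Submodule.smul_mem _ r hx
      | add x y hx hy => rw [map_add]; exact add_mem hx hy
  · rw [commutatorSubmodule, Submodule.span_le]
    rintro _ ⟨x, y, rfl⟩
    set S := (LinearMap.range (TensorProduct.map (commutatorSubmodule k A).subtype
        (LinearMap.id : B →ₗ[k] B)) ⊔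
      LinearMap.range (TensorProduct.map (LinearMap.id : A →ₗ[k] A)
        (commutatorSubmodule k B).subtype)) with hS
    show x * y - y * x ∈ S
    induction x using TensorProduct.induction_on with
    | zero => simp
    | tmul a b =>
      induction y using TensorProduct.induction_on with
      | zero => simp
      | tmul a' b' =>
        have : (a ⊗ₜ[k] b) * (a' ⊗ₜ[k] b') - (a' ⊗ₜ[k] b') * (a ⊗ₜ[k] b) =
            (a * a' - a' * a) ⊗ₜ[k] (b * b') + (a' * a) ⊗ₜ[k] (b * b' - b' * b) := by
          rw [TensorProduct.sub_tmul, TensorProduct.tmul_sub,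
            Algebra.TensorProduct.tmul_mul_tmul, Algebra.TensorProduct.tmul_mul_tmul]
          abel
        rw [this]
        refine add_mem ?_ ?_
        · exact Submodule.mem_sup_left
            ⟨(⟨a * a' - a' * a, comm_mem_commutatorSubmodule a a'⟩ :
              commutatorSubmodule k A) ⊗ₜ[k] (b * b'), rfl⟩
        · exact Submodule.mem_sup_right
            ⟨(a' * a) ⊗ₜ[k] (⟨b * b' - b' * b, comm_mem_commutatorSubmodule b b'⟩ :
              commutatorSubmodule k B), rfl⟩
      | add y₁ y₂ h₁ h₂ =>
        have : (a ⊗ₜ[k] b) * (y₁ + y₂) - (y₁ + y₂) * (a ⊗ₜ[k] b) =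
            ((a ⊗ₜ[k] b) * y₁ - y₁ * (a ⊗ₜ[k] b)) + ((a ⊗ₜ[k] b) * y₂ - y₂ * (a ⊗ₜ[k] b)) := by
          noncomm_ring
        rw [this]; exact add_mem h₁ h₂
    | add x₁ x₂ h₁ h₂ =>
      have : (x₁ + x₂) * y - y * (x₁ + x₂) =
          (x₁ * y - y * x₁) + (x₂ * y - y * x₂) := by noncomm_ring
      rw [this]; exact add_mem h₁ h₂

/-- For `k`-algebras `A` and `B`, the canonical map
`tr(A) ⊗ tr(B) → tr(A ⊗ B)`, `(a + [A,A]) ⊗ (b + [B,B]) ↦ a⊗b + [A⊗B,A⊗B]`,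
is a well-defined isomorphism of `k`-modules. -/
theorem stmt1 (k A B : Type*) [CommRing k] [Ring A] [Ring B]
    [Algebra k A] [Algebra k B] :
    ∃ f : ((A ⧸ commutatorSubmodule k A) ⊗[k] (B ⧸ commutatorSubmodule k B)) ≃ₗ[k]
        ((A ⊗[k] B) ⧸ commutatorSubmodule k (A ⊗[k] B)),
      ∀ (a : A) (b : B),
        f (Submodule.Quotient.mk a ⊗ₜ[k] Submodule.Quotient.mk b) =
          Submodule.Quotient.mk (a ⊗ₜ[k] b) := by
  refine ⟨(TensorProduct.quotientTensorQuotientEquiv (commutatorSubmodule k A)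
      (commutatorSubmodule k B)).trans (Submodule.quotEquivOfEq _ _ (key_eq k A B)),
    fun a b => ?_⟩
  simp only [LinearEquiv.trans_apply,
    TensorProduct.quotientTensorQuotientEquiv_apply_tmul_mk_tmul_mk,
    Submodule.quotEquivOfEq_mk]
end

section
/- In the degenerate affine Hecke algebra R(n) over k[ħ], the intertwiners φ_k = (x_k − x_{k+1})τ_k + ħ satisfy the braid relations: φ_k φ_{k+1} φ_k = φ_{k+1} φ_k φ_{k+1} for 1 ≤ k ≤ n−2, and φ_k φ_l = φ_l φ_k whenever |k−l| > 1. -/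
/-- Braid relation for intertwiners, abstract version. -/
theorem braid_aux {R : Type*} [Ring R] (a b c s t h : R)
    (hha : a * h = h * a) (hhb : b * h = h * b) (hhc : c * h = h * c)
    (hhs : s * h = h * s) (hht : t * h = h * t)
    (hab : b * a = a * b) (hac : c * a = a * c) (hbc : c * b = b * c)
    (hs2 : s * s = 1) (ht2 : t * t = 1)
    (hbr : t * s * t = s * t * s)
    (hsa : s * a = b * s - h) (hsb : s * b = a * s + h) (hsc : s * c = c * s)
    (hta : t * a = a * t) (htb : t * b = c * t - h) (htc : t * c = b * t + h) :
    ((a - b) * s + h) * ((b - c) * t + h) * ((a - b) * s + h)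
      = ((b - c) * t + h) * ((a - b) * s + h) * ((b - c) * t + h) := by
  -- trailing-factor versions of all rewrite rules
  have Hha : ∀ r : R, a * (h * r) = h * (a * r) := fun r => by
    rw [← mul_assoc, hha, mul_assoc]
  have Hhb : ∀ r : R, b * (h * r) = h * (b * r) := fun r => by
    rw [← mul_assoc, hhb, mul_assoc]
  have Hhc : ∀ r : R, c * (h * r) = h * (c * r) := fun r => by
    rw [← mul_assoc, hhc, mul_assoc]
  have Hhs : ∀ r : R, s * (h * r) = h * (s * r) := fun r => by
    rw [← mul_assoc, hhs, mul_assoc]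
  have Hht : ∀ r : R, t * (h * r) = h * (t * r) := fun r => by
    rw [← mul_assoc, hht, mul_assoc]
  have Hab : ∀ r : R, b * (a * r) = a * (b * r) := fun r => by
    rw [← mul_assoc, hab, mul_assoc]
  have Hac : ∀ r : R, c * (a * r) = a * (c * r) := fun r => by
    rw [← mul_assoc, hac, mul_assoc]
  have Hbc : ∀ r : R, c * (b * r) = b * (c * r) := fun r => by
    rw [← mul_assoc, hbc, mul_assoc]
  have Hs2 : ∀ r : R, s * (s * r) = r := fun r => by
    rw [← mul_assoc, hs2, one_mul]
  have Ht2 : ∀ r : R, t * (t * r) = r := fun r => by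
    rw [← mul_assoc, ht2, one_mul]
  have Hbr : ∀ r : R, t * (s * (t * r)) = s * (t * (s * r)) := fun r => by
    rw [← mul_assoc, ← mul_assoc, hbr, mul_assoc, mul_assoc]
  have Hsa : ∀ r : R, s * (a * r) = b * (s * r) - h * r := fun r => by
    rw [← mul_assoc, hsa, sub_mul, mul_assoc]
  have Hsb : ∀ r : R, s * (b * r) = a * (s * r) + h * r := fun r => by
    rw [← mul_assoc, hsb, add_mul, mul_assoc]
  have Hsc : ∀ r : R, s * (c * r) = c * (s * r) := fun r => by
    rw [← mul_assoc, hsc, mul_assoc]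
  have Hta : ∀ r : R, t * (a * r) = a * (t * r) := fun r => by
    rw [← mul_assoc, hta, mul_assoc]
  have Htb : ∀ r : R, t * (b * r) = c * (t * r) - h * r := fun r => by
    rw [← mul_assoc, htb, sub_mul, mul_assoc]
  have Htc : ∀ r : R, t * (c * r) = b * (t * r) + h * r := fun r => by
    rw [← mul_assoc, htc, add_mul, mul_assoc]
  have hbr2 : t * (s * t) = s * (t * s) := by rw [← mul_assoc, hbr, mul_assoc]
  simp only [sub_mul, mul_sub, add_mul, mul_add, mul_assoc, mul_one,
    Hha, Hhb, Hhc, Hhs, Hht, Hab, Hac, Hbc, Hs2, Ht2, Hbr, Hsa, Hsb, Hsc, Hta, Htb, Htc,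
    hbr2, hha, hhb, hhc, hhs, hht, hab, hac, hbc, hs2, ht2, hsa, hsb, hsc, hta, htb, htc]
  abel

/-- Commutation of distant intertwiners, abstract version. -/
theorem comm_aux {R : Type*} [Ring R] (a b c d s t h : R)
    (hha : a * h = h * a) (hhb : b * h = h * b)
    (hhc : c * h = h * c) (hhd : d * h = h * d)
    (hhs : s * h = h * s) (hht : t * h = h * t)
    (hca : c * a = a * c) (hcb : c * b = b * c) (hda : d * a = a * d) (hdb : d * b = b * d)
    (hts : t * s = s * t)
    (hsc : s * c = c * s) (hsd : s * d = d * s)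
    (hta : t * a = a * t) (htb : t * b = b * t) :
    ((a - b) * s + h) * ((c - d) * t + h)
      = ((c - d) * t + h) * ((a - b) * s + h) := by
  have Hca : ∀ r : R, c * (a * r) = a * (c * r) := fun r => by
    rw [← mul_assoc, hca, mul_assoc]
  have Hcb : ∀ r : R, c * (b * r) = b * (c * r) := fun r => by
    rw [← mul_assoc, hcb, mul_assoc]
  have Hda : ∀ r : R, d * (a * r) = a * (d * r) := fun r => by
    rw [← mul_assoc, hda, mul_assoc]
  have Hdb : ∀ r : R, d * (b * r) = b * (d * r) := fun r => by
    rw [← mul_assoc, hdb, mul_assoc]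
  have Hts : ∀ r : R, t * (s * r) = s * (t * r) := fun r => by
    rw [← mul_assoc, hts, mul_assoc]
  have Hsc : ∀ r : R, s * (c * r) = c * (s * r) := fun r => by
    rw [← mul_assoc, hsc, mul_assoc]
  have Hsd : ∀ r : R, s * (d * r) = d * (s * r) := fun r => by
    rw [← mul_assoc, hsd, mul_assoc]
  have Hta : ∀ r : R, t * (a * r) = a * (t * r) := fun r => by
    rw [← mul_assoc, hta, mul_assoc]
  have Htb : ∀ r : R, t * (b * r) = b * (t * r) := fun r => by
    rw [← mul_assoc, htb, mul_assoc]
  have Hha : ∀ r : R, a * (h * r) = h * (a * r) := fun r => by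
    rw [← mul_assoc, hha, mul_assoc]
  have Hhb : ∀ r : R, b * (h * r) = h * (b * r) := fun r => by
    rw [← mul_assoc, hhb, mul_assoc]
  have Hhc : ∀ r : R, c * (h * r) = h * (c * r) := fun r => by
    rw [← mul_assoc, hhc, mul_assoc]
  have Hhd : ∀ r : R, d * (h * r) = h * (d * r) := fun r => by
    rw [← mul_assoc, hhd, mul_assoc]
  simp only [sub_mul, mul_sub, add_mul, mul_add, mul_assoc, mul_one,
    Hca, Hcb, Hda, Hdb, Hts, Hsc, Hsd, Hta, Htb, Hha, Hhb, Hhc, Hhd,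
    hca, hcb, hda, hdb, hts, hsc, hsd, hta, htb, hha, hhb, hhc, hhd, hhs, hht]
  abel

/-- In the degenerate affine Hecke algebra `R(n)` over `k[ħ]` (stated here for any ring
containing a central element `hbar` and elements `τ_1,…,τ_{n-1}`, `x_1,…,x_n` satisfying
the defining relations), the intertwiners `φ_k = (x_k − x_{k+1})τ_k + ħ` satisfy the
braid relations: `φ_k φ_{k+1} φ_k = φ_{k+1} φ_k φ_{k+1}` for `1 ≤ k ≤ n−2`, and
`φ_k φ_l = φ_l φ_k` whenever `|k−l| > 1`. -/
theorem stmt9 (R : Type*) [Ring R] (n : ℕ) (hbar : R) (x τ : ℕ → R)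
    (hcen : ∀ r : R, hbar * r = r * hbar)
    (hxx : ∀ k l, 1 ≤ k → k ≤ n → 1 ≤ l → l ≤ n → x k * x l = x l * x k)
    (hττ : ∀ k l, 1 ≤ k → k ≤ n - 1 → 1 ≤ l → l ≤ n - 1 → k + 1 < l →
      τ k * τ l = τ l * τ k)
    (hτ2 : ∀ l, 1 ≤ l → l ≤ n - 1 → τ l * τ l = 1)
    (hbraid : ∀ k, 1 ≤ k → k + 1 ≤ n - 1 →
      τ (k + 1) * τ k * τ (k + 1) = τ k * τ (k + 1) * τ k)
    (hτx : ∀ k l, 1 ≤ k → k ≤ n - 1 → 1 ≤ l → l ≤ n →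
      τ k * x l - x (if l = k then k + 1 else if l = k + 1 then k else l) * τ k =
        (if l = k + 1 then hbar else 0) - (if l = k then hbar else 0)) :
    (∀ k, 1 ≤ k → k + 1 ≤ n - 1 →
      ((x k - x (k + 1)) * τ k + hbar) * ((x (k + 1) - x (k + 2)) * τ (k + 1) + hbar) *
          ((x k - x (k + 1)) * τ k + hbar) =
        ((x (k + 1) - x (k + 2)) * τ (k + 1) + hbar) * ((x k - x (k + 1)) * τ k + hbar) *
          ((x (k + 1) - x (k + 2)) * τ (k + 1) + hbar)) ∧
    (∀ k l, 1 ≤ k → k ≤ n - 1 → 1 ≤ l → l ≤ n - 1 → (k + 1 < l ∨ l + 1 < k) →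
      ((x k - x (k + 1)) * τ k + hbar) * ((x l - x (l + 1)) * τ l + hbar) =
        ((x l - x (l + 1)) * τ l + hbar) * ((x k - x (k + 1)) * τ k + hbar)) := by
  have comm_tx : ∀ m l, 1 ≤ m → m ≤ n - 1 → 1 ≤ l → l ≤ n → l ≠ m → l ≠ m + 1 →
      τ m * x l = x l * τ m := by
    intro m l h1 h2 h3 h4 h5 h6
    have h := hτx m l h1 h2 h3 h4
    simp only [if_neg h5, if_neg h6, sub_zero, sub_eq_zero] at h
    exact h
  have tx_self : ∀ m, 1 ≤ m → m ≤ n - 1 → τ m * x m = x (m + 1) * τ m - hbar := by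
    intro m h1 h2
    have h := hτx m m h1 h2 (by omega) (by omega)
    have hne : ¬ (m = m + 1) := by omega
    simp only [if_pos rfl, if_true, if_neg hne, zero_sub] at h
    rw [sub_eq_iff_eq_add] at h
    rw [h]; abel
  have tx_succ : ∀ m, 1 ≤ m → m ≤ n - 1 → τ m * x (m + 1) = x m * τ m + hbar := by
    intro m h1 h2
    have h := hτx m (m + 1) h1 h2 (by omega) (by omega)
    have hne : ¬ (m + 1 = m) := by omega
    simp only [if_pos rfl, if_true, if_neg hne, sub_zero] at h
    rw [sub_eq_iff_eq_add] at h
    rw [h]; abel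
  constructor
  · intro k hk1 hk2
    have hn3 : 3 ≤ n := by omega
    exact braid_aux (x k) (x (k + 1)) (x (k + 2)) (τ k) (τ (k + 1)) hbar
      (hcen (x k)).symm (hcen (x (k + 1))).symm (hcen (x (k + 2))).symm
      (hcen (τ k)).symm (hcen (τ (k + 1))).symm
      (hxx (k + 1) k (by omega) (by omega) (by omega) (by omega))
      (hxx (k + 2) k (by omega) (by omega) (by omega) (by omega))
      (hxx (k + 2) (k + 1) (by omega) (by omega) (by omega) (by omega))
      (hτ2 k (by omega) (by omega)) (hτ2 (k + 1) (by omega) (by omega))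
      (hbraid k hk1 hk2)
      (tx_self k (by omega) (by omega))
      (tx_succ k (by omega) (by omega))
      (comm_tx k (k + 2) (by omega) (by omega) (by omega) (by omega) (by omega) (by omega))
      (comm_tx (k + 1) k (by omega) (by omega) (by omega) (by omega) (by omega) (by omega))
      (tx_self (k + 1) (by omega) (by omega))
      (tx_succ (k + 1) (by omega) (by omega))
  · intro k l hk1 hk2 hl1 hl2 hkl
    have hts : τ l * τ k = τ k * τ l := by
      rcases hkl with h | h
      · exact (hττ k l hk1 hk2 hl1 hl2 h).symm
      · exact hττ l k hl1 hl2 hk1 hk2 h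
    have hfar : l ≠ k ∧ l ≠ k + 1 ∧ l + 1 ≠ k ∧ l + 1 ≠ k + 1 ∧
        k ≠ l ∧ k ≠ l + 1 ∧ k + 1 ≠ l ∧ k + 1 ≠ l + 1 := by omega
    obtain ⟨f1, f2, f3, f4, f5, f6, f7, f8⟩ := hfar
    exact comm_aux (x k) (x (k + 1)) (x l) (x (l + 1)) (τ k) (τ l) hbar
      (hcen (x k)).symm (hcen (x (k + 1))).symm (hcen (x l)).symm (hcen (x (l + 1))).symm
      (hcen (τ k)).symm (hcen (τ l)).symm
      (hxx l k (by omega) (by omega) (by omega) (by omega))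
      (hxx l (k + 1) (by omega) (by omega) (by omega) (by omega))
      (hxx (l + 1) k (by omega) (by omega) (by omega) (by omega))
      (hxx (l + 1) (k + 1) (by omega) (by omega) (by omega) (by omega))
      hts
      (comm_tx k l hk1 hk2 hl1 (by omega) f1 f2)
      (comm_tx k (l + 1) hk1 hk2 (by omega) (by omega) f3 f4)
      (comm_tx l k hl1 hl2 hk1 (by omega) f5 f6)
      (comm_tx l (k + 1) hl1 hl2 (by omega) (by omega) f7 f8)
end

section
/- Fix positive integers r and n. Let 𝒫_n(r) be the set of all partitions μ such that ℓ(μ) + Σ_i ⌊μ_i/r⌋ ≤ n, where ℓ(μ) is the number of parts. Then the cardinality of 𝒫_n(r) equals the number of r-multipartitions of n, i.e. the number of r-tuples (λ^{(1)},…,λ^{(r)}) of partitions with |λ^{(1)}| + ⋯ + |λ^{(r)}| = n. -/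
open Multiset

namespace Stmt14Aux

variable {ι : Type*}

lemma filter_finsum (s : Finset ι) (f : ι → Multiset ℕ)
    (p : ℕ → Prop) [DecidablePred p] :
    (∑ i ∈ s, f i).filter p = ∑ i ∈ s, (f i).filter p := by
  classical
  induction s using Finset.cons_induction with
  | empty => simp
  | cons a s h ih => simp [Finset.sum_insert h, Multiset.filter_add, ih]

lemma map_finsum (s : Finset ι) (f : ι → Multiset ℕ) (g : ℕ → ℕ) :
    (∑ i ∈ s, f i).map g = ∑ i ∈ s, (f i).map g := by
  classical
  induction s using Finset.cons_induction with
  | empty => simp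
  | cons a s h ih => simp [Finset.sum_insert h, Multiset.map_add, ih]

lemma sum_finsum (s : Finset ι) (f : ι → Multiset ℕ) :
    (∑ i ∈ s, f i).sum = ∑ i ∈ s, (f i).sum := by
  classical
  induction s using Finset.cons_induction with
  | empty => simp
  | cons a s h ih => simp [Finset.sum_insert h, Multiset.sum_add, ih]

lemma sum_map_div_add_one (r : ℕ) (μ : Multiset ℕ) :
    (μ.map (fun m => m / r + 1)).sum = Multiset.card μ + (μ.map (fun m => m / r)).sum := by
  induction μ using Multiset.induction with
  | empty => simp
  | cons a s ih => simp [ih]; ring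

lemma filter_mod_decomp (r : ℕ) (hr : 0 < r) (μ : Multiset ℕ) :
    ∑ p : Fin r, μ.filter (fun m => m % r = (p : ℕ)) = μ := by
  induction μ using Multiset.induction with
  | empty => simp
  | cons a s ih =>
    simp only [Multiset.filter_cons]
    rw [Finset.sum_add_distrib, ih]
    have h1 : ∑ p : Fin r, (if a % r = (p : ℕ) then ({a} : Multiset ℕ) else 0) = {a} := by
      rw [Finset.sum_eq_single (⟨a % r, Nat.mod_lt a hr⟩ : Fin r)]
      · simp
      · intro b _ hb
        exact if_neg fun h => hb (Fin.ext h.symm)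
      · simp
    rw [h1, Multiset.singleton_add]

/-- forward map -/
def fwd (r n : ℕ) (μ : Multiset ℕ) : Fin r → Multiset ℕ := fun p =>
  (μ.filter (fun m => m % r = (p : ℕ))).map (fun m => m / r + 1)
  + (if (p : ℕ) = 0 then
      Multiset.replicate (n - (Multiset.card μ + (μ.map (fun m => m / r)).sum)) 1 else 0)

/-- backward map -/
def bwd (r : ℕ) (lam : Fin r → Multiset ℕ) : Multiset ℕ :=
  ∑ p : Fin r, ((lam p).map (fun k => (k - 1) * r + (p : ℕ))).filter (fun m => 0 < m)

lemma g_mod {r : ℕ} (p : Fin r) (k : ℕ) : ((k - 1) * r + (p : ℕ)) % r = (p : ℕ) := by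
  rw [add_comm, Nat.add_mul_mod_self_right, Nat.mod_eq_of_lt p.isLt]

lemma g_div {r : ℕ} (hr : 0 < r) (p : Fin r) (k : ℕ) (hk : 0 < k) :
    ((k - 1) * r + (p : ℕ)) / r + 1 = k := by
  rw [mul_comm, Nat.mul_add_div hr, Nat.div_eq_of_lt p.isLt]
  omega

lemma bwd_pos {r : ℕ} (lam : Fin r → Multiset ℕ) : ∀ m ∈ bwd r lam, 0 < m := by
  intro m hm
  rw [bwd, Multiset.mem_sum] at hm
  obtain ⟨p, _, hm⟩ := hm
  exact (Multiset.mem_filter.mp hm).2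

lemma piece_eq {r : ℕ} (hr : 0 < r) (p : Fin r) (s : Multiset ℕ)
    (hpos : ∀ m ∈ s, 0 < m) :
    (s.map (fun k => (k - 1) * r + (p : ℕ))).filter (fun m => 0 < m)
      = (s.filter (fun k => 0 < (k - 1) * r + (p : ℕ))).map
          (fun k => (k - 1) * r + (p : ℕ)) := by
  rw [Multiset.filter_map]
  rfl

lemma recover {r : ℕ} (hr : 0 < r) (p : Fin r) (s : Multiset ℕ)
    (hpos : ∀ m ∈ s, 0 < m) :
    ((s.filter (fun k => 0 < (k - 1) * r + (p : ℕ))).map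
        (fun k => (k - 1) * r + (p : ℕ))).map (fun m => m / r + 1)
      = s.filter (fun k => 0 < (k - 1) * r + (p : ℕ)) := by
  rw [Multiset.map_map]
  have h : ∀ k ∈ s.filter (fun k => 0 < (k - 1) * r + (p : ℕ)),
      ((fun m => m / r + 1) ∘ fun k => (k - 1) * r + (p : ℕ)) k = id k :=
    fun k hk => g_div hr p k (hpos k (Multiset.mem_of_mem_filter hk))
  rw [Multiset.map_congr rfl h, Multiset.map_id]

lemma bwd_cost {r : ℕ} (hr : 0 < r) (lam : Fin r → Multiset ℕ)
    (hpos : ∀ p, ∀ m ∈ lam p, 0 < m) :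
    Multiset.card (bwd r lam) + ((bwd r lam).map (fun m => m / r)).sum
      + (lam ⟨0, hr⟩).count 1 = ∑ p, (lam p).sum := by
  rw [← sum_map_div_add_one]
  rw [bwd, map_finsum]
  have hpieces : ∀ p : Fin r,
      ((((lam p).map (fun k => (k - 1) * r + (p : ℕ))).filter (fun m => 0 < m)).map
        (fun m => m / r + 1))
      = (lam p).filter (fun k => 0 < (k - 1) * r + (p : ℕ)) := by
    intro p
    rw [piece_eq hr p _ (hpos p), recover hr p _ (hpos p)]
  simp only [hpieces]
  rw [sum_finsum]
  have hsplit : ∀ p : Fin r, (lam p).sum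
      = ((lam p).filter (fun k => 0 < (k - 1) * r + (p : ℕ))).sum
        + ((lam p).filter (fun k => ¬ 0 < (k - 1) * r + (p : ℕ))).sum := by
    intro p
    rw [← Multiset.sum_add, Multiset.filter_add_not]
  rw [Finset.sum_congr rfl (fun p _ => hsplit p), Finset.sum_add_distrib]
  congr 1
  rw [Finset.sum_eq_single (⟨0, hr⟩ : Fin r)]
  · have : (lam ⟨0, hr⟩).filter (fun k => ¬ 0 < (k - 1) * r + ((⟨0, hr⟩ : Fin r) : ℕ))
        = (lam ⟨0, hr⟩).filter (· = 1) := by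
      apply Multiset.filter_congr
      intro k hk
      have := hpos _ k hk
      simp only [Fin.val_mk, add_zero]
      constructor
      · intro h
        have h0 : (k - 1) * r = 0 := Nat.eq_zero_of_not_pos h
        rcases Nat.mul_eq_zero.mp h0 with h1 | h1 <;> omega
      · intro h; subst h; simp
    rw [this, Multiset.filter_eq', Multiset.sum_replicate, smul_eq_mul, mul_one]
  · intro b _ hb
    have hb0 : (b : ℕ) ≠ 0 := fun h => hb (Fin.ext h)
    rw [Multiset.filter_eq_nil.mpr, Multiset.sum_zero]
    intro k _ h
    exact h (Nat.add_pos_right _ (Nat.pos_of_ne_zero hb0))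
  · simp

lemma bwd_fwd {r n : ℕ} (hr : 0 < r) (μ : Multiset ℕ) (hpos : ∀ m ∈ μ, 0 < m) :
    bwd r (fwd r n μ) = μ := by
  rw [bwd]
  have key : ∀ p : Fin r,
      (((fwd r n μ p).map (fun k => (k - 1) * r + (p : ℕ))).filter (fun m => 0 < m))
        = μ.filter (fun m => m % r = (p : ℕ)) := by
    intro p
    rw [fwd]
    rw [Multiset.map_add, Multiset.filter_add]
    have hA : (((μ.filter (fun m => m % r = (p : ℕ))).map (fun m => m / r + 1)).map
          (fun k => (k - 1) * r + (p : ℕ))).filter (fun m => 0 < m)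
        = μ.filter (fun m => m % r = (p : ℕ)) := by
      rw [Multiset.map_map]
      have : ((μ.filter (fun m => m % r = (p : ℕ))).map
          ((fun k => (k - 1) * r + (p : ℕ)) ∘ (fun m => m / r + 1)))
          = μ.filter (fun m => m % r = (p : ℕ)) := by
        have h : ∀ m ∈ μ.filter (fun m => m % r = (p : ℕ)),
            ((fun k => (k - 1) * r + (p : ℕ)) ∘ fun m => m / r + 1) m = id m := by
          intro m hm
          have h1 : m % r = (p : ℕ) := (Multiset.mem_filter.mp hm).2
          simp only [Function.comp_apply, Nat.add_sub_cancel, id]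
          rw [← h1]
          exact Nat.div_add_mod' m r
        rw [Multiset.map_congr rfl h, Multiset.map_id]
      rw [this, Multiset.filter_eq_self.mpr]
      intro m hm
      exact hpos m (Multiset.mem_of_mem_filter hm)
    have hB : (((if (p : ℕ) = 0 then
            Multiset.replicate (n - (Multiset.card μ + (μ.map (fun m => m / r)).sum)) 1
          else 0) : Multiset ℕ).map (fun k => (k - 1) * r + (p : ℕ))).filter
          (fun m => 0 < m) = 0 := by
      split
      · next h =>
        rw [Multiset.map_replicate, Multiset.filter_eq_nil.mpr]
        intro m hm
        rw [Multiset.eq_of_mem_replicate hm]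
        simp [h]
      · simp
    rw [hA, hB, add_zero]
  simp only [key]
  exact filter_mod_decomp r hr μ

lemma fwd_bwd {r n : ℕ} (hr : 0 < r) (lam : Fin r → Multiset ℕ)
    (hpos : ∀ p, ∀ m ∈ lam p, 0 < m) (hsum : (∑ p, (lam p).sum) = n) :
    fwd r n (bwd r lam) = lam := by
  funext p
  rw [fwd]
  have step1 : (bwd r lam).filter (fun m => m % r = (p : ℕ))
      = ((lam p).map (fun k => (k - 1) * r + (p : ℕ))).filter (fun m => 0 < m) := by
    rw [bwd, filter_finsum]
    rw [Finset.sum_eq_single p]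
    · rw [Multiset.filter_filter]
      refine Multiset.filter_congr fun m hm => ?_
      obtain ⟨k, _, rfl⟩ := Multiset.mem_map.mp hm
      exact ⟨fun h => h.2, fun h => ⟨g_mod p k, h⟩⟩
    · intro q _ hq
      rw [Multiset.filter_eq_nil.mpr]
      intro m hm h
      obtain ⟨k, _, rfl⟩ := Multiset.mem_map.mp (Multiset.mem_of_mem_filter hm)
      rw [g_mod] at h
      exact hq (Fin.ext h)
    · simp
  rw [step1, piece_eq hr p _ (hpos p), recover hr p _ (hpos p)]
  by_cases hp : (p : ℕ) = 0
  · have hpeq : p = ⟨0, hr⟩ := Fin.ext hp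
    subst hpeq
    rw [if_pos rfl]
    have hc := bwd_cost hr lam hpos
    rw [hsum] at hc
    have hS : n - (Multiset.card (bwd r lam) + ((bwd r lam).map (fun m => m / r)).sum)
        = (lam ⟨0, hr⟩).count 1 := by omega
    rw [hS]
    have hrep : Multiset.replicate ((lam ⟨0, hr⟩).count 1) 1
        = (lam ⟨0, hr⟩).filter (· = 1) := (Multiset.filter_eq' _ _).symm
    rw [hrep]
    have : ((lam ⟨0, hr⟩).filter (· = 1))
        = (lam ⟨0, hr⟩).filter (fun k => ¬ 0 < (k - 1) * r + ((⟨0, hr⟩ : Fin r) : ℕ)) := by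
      apply Multiset.filter_congr
      intro k hk
      have := hpos _ k hk
      simp only [Fin.val_mk, add_zero]
      constructor
      · intro h; subst h; simp
      · intro h
        have h0 : (k - 1) * r = 0 := Nat.eq_zero_of_not_pos h
        rcases Nat.mul_eq_zero.mp h0 with h1 | h1 <;> omega
    rw [this, Multiset.filter_add_not]
  · rw [if_neg hp, add_zero, Multiset.filter_eq_self.mpr]
    intro k _
    exact Nat.add_pos_right _ (Nat.pos_of_ne_zero hp)

lemma fwd_pos {r n : ℕ} (μ : Multiset ℕ) (p : Fin r) : ∀ m ∈ fwd r n μ p, 0 < m := by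
  intro m hm
  rw [fwd, Multiset.mem_add] at hm
  rcases hm with hm | hm
  · obtain ⟨k, _, rfl⟩ := Multiset.mem_map.mp hm
    exact Nat.succ_pos _
  · split at hm
    · rw [Multiset.eq_of_mem_replicate hm]; omega
    · simp at hm

lemma fwd_sum {r n : ℕ} (hr : 0 < r) (μ : Multiset ℕ)
    (hcost : Multiset.card μ + (μ.map (fun m => m / r)).sum ≤ n) :
    (∑ p, (fwd r n μ p).sum) = n := by
  simp only [fwd, Multiset.sum_add]
  rw [Finset.sum_add_distrib]
  have h1 : ∑ p : Fin r, ((μ.filter (fun m => m % r = (p : ℕ))).map (fun m => m / r + 1)).sum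
      = Multiset.card μ + (μ.map (fun m => m / r)).sum := by
    rw [← sum_finsum, ← map_finsum, filter_mod_decomp r hr μ, sum_map_div_add_one]
  have h2 : ∑ p : Fin r, ((if (p : ℕ) = 0 then
        Multiset.replicate (n - (Multiset.card μ + (μ.map (fun m => m / r)).sum)) 1
      else (0 : Multiset ℕ)).sum)
      = n - (Multiset.card μ + (μ.map (fun m => m / r)).sum) := by
    rw [Finset.sum_eq_single (⟨0, hr⟩ : Fin r)]
    · simp [Multiset.sum_replicate]
    · intro b _ hb
      rw [if_neg (fun h => hb (Fin.ext h)), Multiset.sum_zero]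
    · simp
  rw [h1, h2]
  omega

end Stmt14Aux

open Stmt14Aux in
/-- Fix positive integers `r` and `n`.  The number of partitions `μ` (encoded as
multisets of positive integers) with `ℓ(μ) + Σᵢ ⌊μᵢ/r⌋ ≤ n` equals the number of
`r`-multipartitions of `n`, i.e. `r`-tuples of partitions whose sizes sum to `n`. -/
theorem stmt14 (r n : ℕ) (hr : 0 < r) (hn : 0 < n) :
    Nat.card {μ : Multiset ℕ //
        (∀ m ∈ μ, 0 < m) ∧ Multiset.card μ + (μ.map (fun m => m / r)).sum ≤ n} =
      Nat.card {lam : Fin r → Multiset ℕ //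
        (∀ p, ∀ m ∈ lam p, 0 < m) ∧ (∑ p, (lam p).sum) = n} := by
  refine Nat.card_congr ?_
  refine
    { toFun := fun x => ⟨fwd r n x.1, fun p => fwd_pos x.1 p, fwd_sum hr x.1 x.2.2⟩
      invFun := fun y => ⟨bwd r y.1, bwd_pos y.1, ?_⟩
      left_inv := fun x => Subtype.ext (bwd_fwd hr x.1 x.2.1)
      right_inv := fun y => Subtype.ext (fwd_bwd hr y.1 y.2.1 y.2.2) }
  have hc := bwd_cost hr y.1 y.2.1
  rw [y.2.2] at hc
  omega
end
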